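/- arXiv:2410.21833 — 3 statements merged into one kernel-verified Lean document; each statement's English description precedes it below -/
import Mathlib

section
/- Let P(x) = Σ_{i=0}^d a_i x^i be a univariate real polynomial of degree at most d such that |P(x)| ≤ 1 for all x ∈ [-1,1]. Then Σ_{i=0}^d |a_i| ≤ 4^d. -/
open Polynomial Polynomial.Chebyshev Finset Real

private lemma myT_natDegree_le : ∀ n : ℕ, (T ℝ n).natDegree ≤ n := by
  have key : ∀ n : ℕ, (T ℝ n).natDegree ≤ n ∧ (T ℝ ((n:ℤ)+1)).natDegree ≤ n + 1 := by
    intro n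
    induction n with
    | zero => exact ⟨by simp [T_zero], by norm_num [T_one]⟩
    | succ m ih =>
      have hc : ((m:ℤ)+1) = ((m+1 : ℕ) : ℤ) := by push_cast; ring
      refine ⟨by rw [← hc]; exact ih.2, ?_⟩
      have heq : T ℝ (((m+1:ℕ):ℤ)+1) = 2 * X * T ℝ ((m:ℤ)+1) - T ℝ (m:ℤ) := by
        rw [← hc, show (m:ℤ)+1+1 = (m:ℤ)+2 by ring]; exact T_add_two ℝ m
      calc (T ℝ (((m+1:ℕ):ℤ)+1)).natDegree
          ≤ max (2 * X * T ℝ ((m:ℤ)+1)).natDegree (T ℝ (m:ℤ)).natDegree := by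
            rw [heq]; exact natDegree_sub_le _ _
        _ ≤ m + 1 + 1 := by
            apply max_le
            · calc (2 * X * T ℝ ((m:ℤ)+1)).natDegree
                  ≤ (2 * X : ℝ[X]).natDegree + (T ℝ ((m:ℤ)+1)).natDegree := natDegree_mul_le
                _ ≤ 1 + (m + 1) := by
                    have h1 : (2 * X : ℝ[X]).natDegree ≤ 1 := by
                      calc (2 * X : ℝ[X]).natDegree ≤ (2:ℝ[X]).natDegree + X.natDegree :=
                            natDegree_mul_le
                        _ ≤ 1 := by simp
                    exact add_le_add h1 ih.2
                _ = m + 1 + 1 := by ring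
            · omega
  exact fun n => (key n).1

private lemma myT_coeff_top : ∀ n : ℕ, (T ℝ ((n:ℤ)+1)).coeff (n+1) = 2^n := by
  intro n
  induction n with
  | zero => norm_num [T_one]
  | succ m ih =>
    have heq : T ℝ (((m+1:ℕ):ℤ)+1) = 2 * X * T ℝ ((m:ℤ)+1) - T ℝ (m:ℤ) := by
      rw [show ((m+1:ℕ):ℤ)+1 = (m:ℤ)+2 by push_cast; ring]; exact T_add_two ℝ m
    rw [heq, coeff_sub]
    have h0 : (T ℝ (m:ℤ)).coeff (m+1+1) = 0 :=
      coeff_eq_zero_of_natDegree_lt (lt_of_le_of_lt (myT_natDegree_le m) (by omega))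
    have h1 : (2 * X * T ℝ ((m:ℤ)+1)).coeff (m+1+1) = 2 * (T ℝ ((m:ℤ)+1)).coeff (m+1) := by
      rw [mul_assoc, (map_ofNat Polynomial.C 2).symm, coeff_C_mul, coeff_X_mul]
    rw [h0, h1, ih]; ring

private lemma cheb_expand : ∀ (n : ℕ) (p : ℝ[X]), p.natDegree ≤ n →
    ∃ c : ℕ → ℝ, p = ∑ k ∈ range (n+1), C (c k) * T ℝ k := by
  intro n
  induction n with
  | zero =>
    intro p hp
    refine ⟨fun _ => p.coeff 0, ?_⟩
    rw [eq_C_of_natDegree_le_zero hp]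
    simp [T_zero]
  | succ m ih =>
    intro p hp
    set t := p.coeff (m+1) / 2^m with ht
    set q := p - C t * T ℝ ((m:ℤ)+1) with hq
    have hqdeg : q.natDegree ≤ m := by
      rw [natDegree_le_iff_coeff_eq_zero]
      intro N hN
      rcases eq_or_lt_of_le (Nat.succ_le_of_lt hN) with hNe | hNl
      · rw [hq, coeff_sub, coeff_C_mul, ← hNe, myT_coeff_top, ht]
        field_simp
        ring
      · have hp0 : p.coeff N = 0 :=
          coeff_eq_zero_of_natDegree_lt (lt_of_le_of_lt hp hNl)
        have hT0 : (T ℝ ((m:ℤ)+1)).coeff N = 0 := by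
          apply coeff_eq_zero_of_natDegree_lt
          have := myT_natDegree_le (m+1)
          push_cast at this
          omega
        rw [hq, coeff_sub, coeff_C_mul, hp0, hT0]; ring
    obtain ⟨c, hc⟩ := ih q hqdeg
    refine ⟨Function.update c (m+1) t, ?_⟩
    rw [Finset.sum_range_succ]
    have h1 : ∑ k ∈ range (m+1), C (Function.update c (m+1) t k) * T ℝ k
        = ∑ k ∈ range (m+1), C (c k) * T ℝ k := by
      apply Finset.sum_congr rfl
      intro k hk
      rw [Function.update_of_ne (by simp at hk; omega)]
    rw [h1, ← hc, Function.update_self, hq]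
    push_cast
    ring

private noncomputable def S (n : ℕ) : ℝ := ∑ i ∈ range (n+1), |(T ℝ n).coeff i|

private lemma S_le : ∀ n : ℕ, S n ≤ 2 * 3 ^ (n - 1) := by
  intro n
  induction n using Nat.strong_induction_on with
  | _ n ih =>
    match n with
    | 0 => simp [_root_.S, T_zero]
    | 1 => norm_num [_root_.S, T_one, Finset.sum_range_succ]
    | (m+2) =>
      have h1 := ih (m+1) (by omega)
      have h0 := ih m (by omega)
      have heq : T ℝ ((m+2:ℕ):ℤ) = C 2 * (X * T ℝ ((m:ℤ)+1)) - T ℝ (m:ℤ) := by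
        rw [show ((m+2:ℕ):ℤ) = (m:ℤ)+2 by push_cast; ring, T_add_two,
          show (2 * X * T ℝ ((m:ℤ)+1) : ℝ[X]) = C 2 * (X * T ℝ ((m:ℤ)+1)) by
            rw [← (map_ofNat Polynomial.C 2).symm]; ring]
      have hstep : S (m+2) ≤ 2 * S (m+1) + S m := by
        have hsum : S (m+2) ≤ (∑ i ∈ range (m+3), 2 * |(X * T ℝ ((m:ℤ)+1)).coeff i|)
            + ∑ i ∈ range (m+3), |(T ℝ (m:ℤ)).coeff i| := by
          rw [_root_.S, ← Finset.sum_add_distrib]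
          apply Finset.sum_le_sum
          intro i _
          rw [heq, coeff_sub, coeff_C_mul]
          calc |2 * (X * T ℝ ((m:ℤ)+1)).coeff i - (T ℝ (m:ℤ)).coeff i|
              ≤ |2 * (X * T ℝ ((m:ℤ)+1)).coeff i| + |(T ℝ (m:ℤ)).coeff i| := abs_sub _ _
            _ = 2 * |(X * T ℝ ((m:ℤ)+1)).coeff i| + |(T ℝ (m:ℤ)).coeff i| := by
                rw [abs_mul]; norm_num
        have hshift : ∑ i ∈ range (m+3), |(X * T ℝ ((m:ℤ)+1)).coeff i| = S (m+1) := by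
          rw [show m+3 = m+2+1 by omega]
          rw [Finset.sum_range_succ']
          simp only [coeff_X_mul]
          have hc0 : (X * T ℝ ((m:ℤ)+1)).coeff 0 = 0 := by
            rw [mul_coeff_zero, coeff_X_zero, zero_mul]
          rw [hc0, abs_zero, add_zero]
          simp [_root_.S]
        have htail : ∑ i ∈ range (m+3), |(T ℝ (m:ℤ)).coeff i| = S m := by
          rw [Finset.sum_range_succ, Finset.sum_range_succ]
          have z1 : (T ℝ (m:ℤ)).coeff (m+1) = 0 :=
            coeff_eq_zero_of_natDegree_lt (lt_of_le_of_lt (myT_natDegree_le m) (by omega))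
          have z2 : (T ℝ (m:ℤ)).coeff (m+2) = 0 :=
            coeff_eq_zero_of_natDegree_lt (lt_of_le_of_lt (myT_natDegree_le m) (by omega))
          rw [z1, z2]; simp [_root_.S]
        calc S (m+2) ≤ _ := hsum
          _ = 2 * S (m+1) + S m := by rw [← Finset.mul_sum, hshift, htail]
      have h1' : S (m+1) ≤ 2 * 3 ^ m := by simpa using h1
      have e3 : (3:ℝ)^(m-1) ≤ 3^m := by
        apply pow_le_pow_right₀ (by norm_num) (by omega)
      have : (3:ℝ)^(m+2-1) = 3 * 3^m := by
        rw [show m+2-1 = m+1 by omega]; ring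
      rw [this]
      nlinarith [hstep]

private lemma trig_sum_zero (N : ℕ) (m : ℤ) (hm : m ≠ 0) (hmN : m.natAbs < N) :
    ∑ j ∈ range N, Real.cos (2 * π * m * j / N) = 0 := by
  have hN0 : 0 < N := by omega
  have hN : (0:ℝ) < N := by exact_mod_cast hN0
  have hNne : (N:ℂ) ≠ 0 := by exact_mod_cast hN.ne'
  set z : ℂ := Complex.exp (2 * π * m / N * Complex.I) with hz
  have hzN : z ^ N = 1 := by
    rw [hz, ← Complex.exp_nat_mul]
    rw [show (N:ℂ) * (2 * π * m / N * Complex.I) = m * (2 * π * Complex.I) by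
      field_simp]
    exact Complex.exp_int_mul_two_pi_mul_I m
  have hz1 : z ≠ 1 := by
    rw [hz, Ne, Complex.exp_eq_one_iff]
    rintro ⟨n, hn⟩
    have hπ : (π:ℂ) ≠ 0 := by exact_mod_cast Real.pi_ne_zero
    have hmn : (m:ℂ) = n * N := by
      field_simp at hn
      have hfac : (2*(π:ℂ)*Complex.I) * ((m:ℂ) - n*N) = 0 := by linear_combination (2*(π:ℂ)*Complex.I) * hn
      rcases mul_eq_zero.mp hfac with h | h
      · exact absurd h (by simp [hπ, Complex.I_ne_zero])
      · linear_combination h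
    have hEq : m = n * N := by exact_mod_cast hmn
    rcases eq_or_ne n 0 with h | h
    · rw [h, zero_mul] at hEq; exact hm hEq
    · have hEq2 : m.natAbs = n.natAbs * N := by rw [hEq]; simp [Int.natAbs_mul]
      have : N ≤ m.natAbs := by
        rw [hEq2]
        calc N = 1 * N := (one_mul N).symm
          _ ≤ n.natAbs * N := by
            apply Nat.mul_le_mul_right
            omega
      omega
  have hsum : ∑ j ∈ range N, z ^ j = 0 := by
    rw [geom_sum_eq hz1, hzN]; simp
  have hre : ∀ j : ℕ, (z ^ j).re = Real.cos (2 * π * m * j / N) := by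
    intro j
    rw [hz, ← Complex.exp_nat_mul]
    rw [show (j:ℂ) * (2 * π * m / N * Complex.I) = ((2 * π * m * j / N : ℝ) : ℂ) * Complex.I by
      push_cast; ring]
    exact Complex.exp_ofReal_mul_I_re _
  calc ∑ j ∈ range N, Real.cos (2 * π * m * j / N) = (∑ j ∈ range N, z ^ j).re := by
        rw [Complex.re_sum]
        exact Finset.sum_congr rfl fun j _ => (hre j).symm
    _ = 0 := by rw [hsum]; simp

private lemma cos_mul_cos' (x y : ℝ) :
    Real.cos x * Real.cos y = (Real.cos (x+y) + Real.cos (x-y))/2 := by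
  rw [Real.cos_add, Real.cos_sub]; ring

private lemma geom_aux : ∀ d : ℕ, ∑ k ∈ range (d+1), (4:ℝ) * 3^(k-1) ≤ 2*3^d + 2 := by
  intro d
  induction d with
  | zero => norm_num
  | succ m ih =>
    rw [Finset.sum_range_succ, show m+1-1 = m by omega]
    nlinarith [ih, pow_succ (3:ℝ) m, pow_pos (show (0:ℝ) < 3 by norm_num) m]

private lemma key (d : ℕ) (a : Fin (d+1) → ℝ)
    (hP : ∀ x ∈ Set.Icc (-1:ℝ) 1, |∑ i : Fin (d+1), a i * x ^ (i:ℕ)| ≤ 1) :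
    ∑ i : Fin (d+1), |a i| ≤ 2 * 3 ^ d + 2 := by
  classical
  set p : ℝ[X] := ∑ i : Fin (d+1), C (a i) * X^(i:ℕ) with hp
  have hpeval : ∀ x : ℝ, p.eval x = ∑ i : Fin (d+1), a i * x ^ (i:ℕ) := by
    intro x
    rw [hp, eval_finset_sum]
    exact Finset.sum_congr rfl fun i _ => by simp
  have hpdeg : p.natDegree ≤ d := by
    apply natDegree_sum_le_of_forall_le
    intro i _
    exact le_trans (natDegree_C_mul_X_pow_le _ _) (by omega)
  have hpcoeff : ∀ i : Fin (d+1), p.coeff (i:ℕ) = a i := by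
    intro i
    rw [hp, finset_sum_coeff]
    rw [Finset.sum_eq_single i]
    · simp
    · intro j _ hne
      simp only [coeff_C_mul, coeff_X_pow]
      rw [if_neg (by simpa [Fin.val_eq_val] using (Fin.val_ne_of_ne hne).symm)]
      ring
    · intro h; exact absurd (Finset.mem_univ i) h
  obtain ⟨c, hc⟩ := cheb_expand d p hpdeg
  have hval : ∀ t : ℝ, p.eval (Real.cos t) = ∑ k ∈ range (d+1), c k * Real.cos (k * t) := by
    intro t
    rw [hc, eval_finset_sum]
    apply Finset.sum_congr rfl
    intro k _
    rw [eval_mul, eval_C, T_real_cos]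
    push_cast
    ring_nf
  set N : ℕ := 2 * d + 1 with hNdef
  have hNpos : (0:ℝ) < N := by positivity
  have hck : ∀ k, k ≤ d → |c k| ≤ 2 := by
    intro k hk
    have horth0 : ∀ k', k' ≤ d → k' ≠ k →
        ∑ j ∈ range N, Real.cos (k' * (2*π*j/N)) * Real.cos (k * (2*π*j/N)) = 0 := by
      intro k' hk' hne
      have hterm : ∀ j : ℕ, Real.cos (k' * (2*π*j/N)) * Real.cos (k * (2*π*j/N))
          = (Real.cos (2*π*(((k'+k:ℕ):ℤ):ℝ)*j/N) + Real.cos (2*π*((((k':ℤ)-k):ℤ):ℝ)*j/N))/2 := by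
        intro j
        rw [cos_mul_cos']
        congr 2
        · push_cast; ring
        · push_cast; ring
      rw [Finset.sum_congr rfl fun j _ => hterm j, ← Finset.sum_div, Finset.sum_add_distrib]
      have e1 : ∑ j ∈ range N, Real.cos (2*π*(((k'+k:ℕ):ℤ):ℝ)*j/N) = 0 := by
        apply trig_sum_zero
        · omega
        · simp only [Int.natAbs_natCast]; omega
      have e2 : ∑ j ∈ range N, Real.cos (2*π*((((k':ℤ)-k):ℤ):ℝ)*j/N) = 0 := by
        apply trig_sum_zero
        · omega
        · omega
      rw [e1, e2]; norm_num
    have hW : (N:ℝ)/2 ≤ ∑ j ∈ range N, Real.cos (k * (2*π*j/N)) * Real.cos (k * (2*π*j/N)) := by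
      rcases Nat.eq_zero_or_pos k with h0 | hpos
      · subst h0
        simp only [Nat.cast_zero, zero_mul, Real.cos_zero, one_mul]
        rw [Finset.sum_const, Finset.card_range]
        simp only [nsmul_eq_mul, mul_one]
        linarith
      · have hterm : ∀ j : ℕ, Real.cos (k * (2*π*j/N)) * Real.cos (k * (2*π*j/N))
            = (Real.cos (2*π*(((2*k:ℕ):ℤ):ℝ)*j/N) + 1)/2 := by
          intro j
          rw [cos_mul_cos']
          rw [show (k:ℝ)*(2*π*j/N) - (k:ℝ)*(2*π*j/N) = 0 by ring, Real.cos_zero]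
          congr 3
          push_cast; ring
        rw [Finset.sum_congr rfl fun j _ => hterm j, ← Finset.sum_div, Finset.sum_add_distrib]
        have e1 : ∑ j ∈ range N, Real.cos (2*π*(((2*k:ℕ):ℤ):ℝ)*j/N) = 0 := by
          apply trig_sum_zero
          · omega
          · simp only [Int.natAbs_natCast]; omega
        rw [e1]
        rw [Finset.sum_const, Finset.card_range]
        simp only [nsmul_eq_mul, mul_one]
        linarith
    have hmain : ∑ j ∈ range N, (p.eval (Real.cos (2*π*j/N))) * Real.cos (k*(2*π*j/N))
        = c k * ∑ j ∈ range N, Real.cos (k * (2*π*j/N)) * Real.cos (k * (2*π*j/N)) := by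
      rw [Finset.mul_sum]
      rw [Finset.sum_congr rfl fun j _ => by
        rw [hval (2*π*j/N), Finset.sum_mul]]
      rw [Finset.sum_comm]
      rw [Finset.sum_eq_single k]
      · exact Finset.sum_congr rfl fun j _ => by ring
      · intro k' hk' hne
        have hfac : ∑ j ∈ range N, c k' * Real.cos (k' * (2*π*j/N)) * Real.cos (k * (2*π*j/N))
            = c k' * ∑ j ∈ range N, Real.cos (k' * (2*π*j/N)) * Real.cos (k * (2*π*j/N)) := by
          rw [Finset.mul_sum]; exact Finset.sum_congr rfl fun j _ => by ring
        rw [hfac, horth0 k' (Nat.lt_succ_iff.mp (Finset.mem_range.mp hk')) hne, mul_zero]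
      · intro hnotmem
        exact absurd (Finset.mem_range.mpr (by omega)) hnotmem
    have hub : |∑ j ∈ range N, (p.eval (Real.cos (2*π*j/N))) * Real.cos (k*(2*π*j/N))| ≤ N := by
      calc |∑ j ∈ range N, (p.eval (Real.cos (2*π*j/N))) * Real.cos (k*(2*π*j/N))|
          ≤ ∑ j ∈ range N, |(p.eval (Real.cos (2*π*j/N))) * Real.cos (k*(2*π*j/N))| :=
            Finset.abs_sum_le_sum_abs _ _
        _ ≤ ∑ _j ∈ range N, (1:ℝ) := by
            apply Finset.sum_le_sum
            intro j _
            rw [abs_mul]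
            have h1 : |p.eval (Real.cos (2*π*j/N))| ≤ 1 := by
              rw [hpeval]
              exact hP _ ⟨Real.neg_one_le_cos _, Real.cos_le_one _⟩
            have h2 : |Real.cos (k*(2*π*j/N))| ≤ 1 := Real.abs_cos_le_one _
            calc |p.eval (Real.cos (2*π*j/N))| * |Real.cos (k*(2*π*j/N))|
                ≤ 1 * 1 := by
                  apply mul_le_mul h1 h2 (abs_nonneg _) zero_le_one
              _ = 1 := by ring
        _ = N := by rw [Finset.sum_const, Finset.card_range]; simp
    rw [hmain, abs_mul] at hub
    have hWabs : |∑ j ∈ range N, Real.cos (k * (2*π*j/N)) * Real.cos (k * (2*π*j/N))|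
        = ∑ j ∈ range N, Real.cos (k * (2*π*j/N)) * Real.cos (k * (2*π*j/N)) :=
      abs_of_nonneg (by linarith)
    rw [hWabs] at hub
    nlinarith [abs_nonneg (c k), hW, hub]
  have hSnn : ∀ k : ℕ, 0 ≤ S k := fun k => Finset.sum_nonneg fun i _ => abs_nonneg _
  have hSk : ∀ k, k ≤ d → ∑ i ∈ range (d+1), |(T ℝ (k:ℤ)).coeff i| = S k := by
    intro k hk
    refine (Finset.sum_subset (Finset.range_subset_range.mpr (by omega)) ?_).symm
    intro i hi hni
    rw [coeff_eq_zero_of_natDegree_lt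
      (lt_of_le_of_lt (myT_natDegree_le k) (by
        have := Finset.mem_range.not.mp hni
        omega)), abs_zero]
  calc ∑ i : Fin (d+1), |a i| = ∑ i ∈ range (d+1), |p.coeff i| := by
        rw [← Fin.sum_univ_eq_sum_range (fun i => |p.coeff i|) (d+1)]
        exact Finset.sum_congr rfl fun i _ => by rw [hpcoeff i]
    _ ≤ ∑ i ∈ range (d+1), ∑ k ∈ range (d+1), |c k| * |(T ℝ (k:ℤ)).coeff i| := by
        apply Finset.sum_le_sum
        intro i _
        rw [hc, finset_sum_coeff]
        calc |∑ k ∈ range (d+1), (C (c k) * T ℝ (k:ℤ)).coeff i|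
            ≤ ∑ k ∈ range (d+1), |(C (c k) * T ℝ (k:ℤ)).coeff i| :=
              Finset.abs_sum_le_sum_abs _ _
          _ = ∑ k ∈ range (d+1), |c k| * |(T ℝ (k:ℤ)).coeff i| :=
              Finset.sum_congr rfl fun k _ => by rw [coeff_C_mul, abs_mul]
    _ = ∑ k ∈ range (d+1), |c k| * ∑ i ∈ range (d+1), |(T ℝ (k:ℤ)).coeff i| := by
        rw [Finset.sum_comm]
        exact Finset.sum_congr rfl fun k _ => by rw [Finset.mul_sum]
    _ = ∑ k ∈ range (d+1), |c k| * S k := by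
        apply Finset.sum_congr rfl
        intro k hk
        rw [hSk k (Nat.lt_succ_iff.mp (Finset.mem_range.mp hk))]
    _ ≤ ∑ k ∈ range (d+1), (4:ℝ) * 3^(k-1) := by
        apply Finset.sum_le_sum
        intro k hk
        calc |c k| * S k ≤ 2 * S k := by
              apply mul_le_mul_of_nonneg_right
                (hck k (Nat.lt_succ_iff.mp (Finset.mem_range.mp hk))) (hSnn k)
          _ ≤ 2 * (2 * 3^(k-1)) := by
              have := S_le k
              linarith
          _ = 4 * 3^(k-1) := by ring
    _ ≤ 2 * 3 ^ d + 2 := geom_aux d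

private lemma num_bound : ∀ d : ℕ, 3 ≤ d → 2 * 3 ^ d + 2 ≤ (4:ℝ) ^ d := by
  intro d hd
  induction d with
  | zero => omega
  | succ m ih =>
    rcases Nat.lt_or_ge m 3 with hm | hm
    · interval_cases m
      · omega
      · omega
      · norm_num
    · have h := ih (by omega)
      have h3 : (0:ℝ) < 3 ^ m := by positivity
      have h4 : (3:ℝ) ^ m ≤ 4 ^ m := by
        apply pow_le_pow_left₀ <;> norm_num
      rw [pow_succ, pow_succ]
      nlinarith

/-- **Sherstov's coefficient bound.** If `P(x) = ∑_{i=0}^d a_i x^i` is a real polynomial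
with `|P(x)| ≤ 1` for all `x ∈ [-1,1]`, then `∑_{i=0}^d |a_i| ≤ 4^d`. -/
theorem coeff_bound_of_bounded_on_interval
    (d : ℕ) (a : Fin (d + 1) → ℝ)
    (hP : ∀ x ∈ Set.Icc (-1 : ℝ) 1, |∑ i : Fin (d + 1), a i * x ^ (i : ℕ)| ≤ 1) :
    ∑ i : Fin (d + 1), |a i| ≤ 4 ^ d := by
  rcases Nat.lt_or_ge d 3 with hd | hd
  · have h0 := hP 0 (by norm_num)
    have h1 := hP 1 (by norm_num)
    have hm1 := hP (-1) (by norm_num)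
    interval_cases d
    · simp only [Fin.sum_univ_succ, Finset.sum_empty] at h0 ⊢
      norm_num at h0 ⊢
      linarith [h0]
    · simp only [Fin.sum_univ_succ, Fin.sum_univ_zero] at h1 hm1 ⊢
      norm_num at h1 hm1 ⊢
      rcases abs_cases (a 0) with ⟨e0, _⟩ | ⟨e0, _⟩ <;>
        rcases abs_cases (a 1) with ⟨e1, _⟩ | ⟨e1, _⟩ <;>
        rw [e0, e1] <;>
        rcases abs_le.mp h1 with ⟨u1, v1⟩ <;>
        rcases abs_le.mp hm1 with ⟨u2, v2⟩ <;>
        linarith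
    · simp only [Fin.sum_univ_succ, Fin.sum_univ_zero] at h0 h1 hm1 ⊢
      norm_num at h0 h1 hm1 ⊢
      rcases abs_cases (a 0) with ⟨e0, _⟩ | ⟨e0, _⟩ <;>
        rcases abs_cases (a 1) with ⟨e1, _⟩ | ⟨e1, _⟩ <;>
        rcases abs_cases (a 2) with ⟨e2, _⟩ | ⟨e2, _⟩ <;>
        rw [e0, e1, e2] <;>
        rcases abs_le.mp h0 with ⟨u0, v0⟩ <;>
        rcases abs_le.mp h1 with ⟨u1, v1⟩ <;>
        rcases abs_le.mp hm1 with ⟨u2, v2⟩ <;>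
        linarith
  · calc ∑ i : Fin (d+1), |a i| ≤ 2 * 3 ^ d + 2 := key d a hP
      _ ≤ 4 ^ d := num_bound d hd
end

section
/- In the setting above (A = Σ A_i, ‖A_i‖ ≤ κ_i, Σκ_i = 1, x drawn from p(x)=κ_{x_1}···κ_{x_r}, X = ⟨ψ|A_{x_1}···A_{x_r}|φ⟩/p(x)), the second moment satisfies E[|X|²] ≤ 1, and hence Var(X) ≤ 1. -/
open scoped Matrix

noncomputable def specNorm {N : ℕ} (A : Matrix (Fin N) (Fin N) ℂ) : ℝ :=
  ‖Matrix.toEuclideanCLM (𝕜 := ℂ) A‖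

lemma specNorm_nonneg {N : ℕ} (A : Matrix (Fin N) (Fin N) ℂ) : 0 ≤ specNorm A :=
  norm_nonneg _

lemma specNorm_mul_le {N : ℕ} (A B : Matrix (Fin N) (Fin N) ℂ) :
    specNorm (A * B) ≤ specNorm A * specNorm B := by
  unfold specNorm; rw [map_mul]; exact norm_mul_le _ _

lemma specNorm_one_le {N : ℕ} : specNorm (1 : Matrix (Fin N) (Fin N) ℂ) ≤ 1 := by
  unfold specNorm; rw [map_one]
  exact ContinuousLinearMap.norm_id_le

lemma specNorm_list_prod {N : ℕ} :
    ∀ l : List (Matrix (Fin N) (Fin N) ℂ), specNorm l.prod ≤ (l.map specNorm).prod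
  | [] => by simpa using specNorm_one_le
  | (h :: t) => by
      simp only [List.prod_cons, List.map_cons]
      calc specNorm (h * t.prod) ≤ specNorm h * specNorm t.prod := specNorm_mul_le _ _
        _ ≤ specNorm h * (t.map specNorm).prod :=
            mul_le_mul_of_nonneg_left (specNorm_list_prod t) (specNorm_nonneg h)

lemma norm_of_unit {N : ℕ} {ψ : Fin N → ℂ} (hψ : star ψ ⬝ᵥ ψ = 1) :
    ‖(WithLp.equiv 2 (Fin N → ℂ)).symm ψ‖ = 1 := by
  set u : EuclideanSpace ℂ (Fin N) := (WithLp.equiv 2 (Fin N → ℂ)).symm ψ with hu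
  have h1 : inner ℂ u u = 1 := by
    exact (dotProduct_comm ψ (star ψ)).trans hψ
  have h3 : ‖u‖ ^ 2 = 1 := by
    rw [@norm_sq_eq_re_inner ℂ, h1]; simp
  rw [← Real.sqrt_sq (norm_nonneg u), h3, Real.sqrt_one]

lemma abs_dotProduct_le {N : ℕ} (M : Matrix (Fin N) (Fin N) ℂ) {ψ φ : Fin N → ℂ}
    (hψ : star ψ ⬝ᵥ ψ = 1) (hφ : star φ ⬝ᵥ φ = 1) :
    ‖star ψ ⬝ᵥ M.mulVec φ‖ ≤ specNorm M := by
  set u : EuclideanSpace ℂ (Fin N) := (WithLp.equiv 2 (Fin N → ℂ)).symm ψ with hu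
  set v : EuclideanSpace ℂ (Fin N) := (WithLp.equiv 2 (Fin N → ℂ)).symm φ with hv
  set T := Matrix.toEuclideanCLM (𝕜 := ℂ) M with hT
  have key : star ψ ⬝ᵥ M.mulVec φ = inner ℂ u (T v) := by
    exact dotProduct_comm (star ψ) (M *ᵥ φ)
  rw [key]
  calc ‖inner ℂ u (T v)‖ ≤ ‖u‖ * ‖T v‖ := norm_inner_le_norm _ _
    _ ≤ ‖u‖ * (‖T‖ * ‖v‖) :=
        mul_le_mul_of_nonneg_left (T.le_opNorm v) (norm_nonneg u)
    _ = ‖T‖ := by rw [norm_of_unit hψ, norm_of_unit hφ]; ring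

open Complex in
lemma var_le_second_moment {α : Type*} [Fintype α] (p : α → ℝ) (hp : ∀ a, 0 ≤ p a)
    (hp1 : ∑ a, p a = 1) (X : α → ℂ) :
    ∑ a, p a * ‖X a - ∑ b, ((p b : ℝ) : ℂ) * X b‖ ^ 2
      ≤ ∑ a, p a * ‖X a‖ ^ 2 := by
  set μ : ℂ := ∑ b, ((p b : ℝ) : ℂ) * X b with hμ
  have key : ∀ a, ‖X a - μ‖ ^ 2 =
      ‖X a‖ ^ 2 - 2 * (X a * starRingEnd ℂ μ).re + ‖μ‖ ^ 2 := by
    intro a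
    rw [Complex.sq_norm, Complex.sq_norm, Complex.sq_norm, Complex.normSq_sub]; ring
  have h2 : ∑ a, p a * (X a * starRingEnd ℂ μ).re = ‖μ‖ ^ 2 := by
    have e1 : ∀ a, p a * (X a * starRingEnd ℂ μ).re
        = ((((p a : ℝ) : ℂ) * X a) * starRingEnd ℂ μ).re := by
      intro a
      rw [mul_assoc]
      simp [Complex.re_ofReal_mul]
    simp_rw [e1]
    rw [← Complex.re_sum, ← Finset.sum_mul, ← hμ, Complex.mul_conj]
    simp [Complex.sq_norm]
  calc ∑ a, p a * ‖X a - μ‖ ^ 2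
      = ∑ a, (p a * ‖X a‖ ^ 2
          - 2 * (p a * (X a * starRingEnd ℂ μ).re) + p a * ‖μ‖ ^ 2) := by
        refine Finset.sum_congr rfl fun a _ => ?_
        rw [key a]; ring
    _ = (∑ a, p a * ‖X a‖ ^ 2)
          - 2 * (∑ a, p a * (X a * starRingEnd ℂ μ).re)
          + (∑ a, p a) * ‖μ‖ ^ 2 := by
        rw [Finset.sum_add_distrib, Finset.sum_sub_distrib, ← Finset.mul_sum,
          ← Finset.sum_mul]
    _ = (∑ a, p a * ‖X a‖ ^ 2) - ‖μ‖ ^ 2 := by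
        rw [h2, hp1]; ring
    _ ≤ ∑ a, p a * ‖X a‖ ^ 2 := by
        have := sq_nonneg (‖μ‖); linarith

/-- **Second moment bound for the importance-sampling estimator.** With `A = ∑ i, A i`,
`‖A i‖ ≤ κ i`, `∑ κ i = 1`, `p(x) = κ_{x_1}⋯κ_{x_r}`, and
`X(x) = ⟨ψ|A_{x_1}⋯A_{x_r}|φ⟩ / p(x)`, we have `E[|X|²] ≤ 1`, and hence `Var(X) ≤ 1`. -/
theorem importance_sampling_second_moment
    {N m : ℕ} (r : ℕ) (A : Matrix (Fin N) (Fin N) ℂ)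
    (B : Fin m → Matrix (Fin N) (Fin N) ℂ) (κ : Fin m → ℝ)
    (hκpos : ∀ i, 0 < κ i) (hκnorm : ∀ i, specNorm (B i) ≤ κ i)
    (hκsum : ∑ i, κ i = 1) (hA : A = ∑ i, B i)
    (ψ φ : Fin N → ℂ) (hψ : star ψ ⬝ᵥ ψ = 1) (hφ : star φ ⬝ᵥ φ = 1) :
    (∑ x : Fin r → Fin m,
        (∏ i, κ (x i)) *
          (‖(star ψ ⬝ᵥ ((List.ofFn fun i : Fin r => B (x i)).prod.mulVec φ)) /
            ((∏ i, κ (x i) : ℝ) : ℂ)‖) ^ 2 ≤ 1) ∧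
      (∑ x : Fin r → Fin m,
        (∏ i, κ (x i)) *
          (‖
            ((star ψ ⬝ᵥ ((List.ofFn fun i : Fin r => B (x i)).prod.mulVec φ)) /
                ((∏ i, κ (x i) : ℝ) : ℂ) -
              ∑ y : Fin r → Fin m,
                ((∏ i, κ (y i) : ℝ) : ℂ) *
                  ((star ψ ⬝ᵥ ((List.ofFn fun i : Fin r => B (y i)).prod.mulVec φ)) /
                    ((∏ i, κ (y i) : ℝ) : ℂ)))‖) ^ 2 ≤ 1) := by
  set p : (Fin r → Fin m) → ℝ := fun x => ∏ i, κ (x i) with hp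
  have hppos : ∀ x, 0 < p x := fun x => Finset.prod_pos fun i _ => hκpos (x i)
  set X : (Fin r → Fin m) → ℂ := fun x =>
    (star ψ ⬝ᵥ ((List.ofFn fun i : Fin r => B (x i)).prod.mulVec φ)) / ((p x : ℝ) : ℂ)
    with hX
  have hpsum : ∑ x, p x = 1 := by
    have := (Fintype.sum_pow κ r).symm
    rw [hκsum] at this
    simpa [hp] using this
  have hXle : ∀ x, ‖X x‖ ≤ 1 := by
    intro x
    have hf : ‖
        (star ψ ⬝ᵥ ((List.ofFn fun i : Fin r => B (x i)).prod.mulVec φ))‖ ≤ p x := by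
      refine (abs_dotProduct_le _ hψ hφ).trans ?_
      refine (specNorm_list_prod _).trans ?_
      rw [List.map_ofFn]
      rw [List.prod_ofFn]
      exact Finset.prod_le_prod (fun i _ => specNorm_nonneg _)
        (fun i _ => hκnorm (x i))
    rw [hX]
    simp only [norm_div, Complex.norm_real, Real.norm_eq_abs]
    rw [abs_of_pos (hppos x), div_le_one (hppos x)]
    exact hf
  have second : ∑ x, p x * ‖X x‖ ^ 2 ≤ 1 := by
    calc ∑ x, p x * ‖X x‖ ^ 2 ≤ ∑ x, p x := by
          refine Finset.sum_le_sum fun x _ => ?_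
          have h1 : ‖X x‖ ^ 2 ≤ 1 :=
            pow_le_one₀ (norm_nonneg _) (hXle x)
          calc p x * ‖X x‖ ^ 2 ≤ p x * 1 :=
                mul_le_mul_of_nonneg_left h1 (hppos x).le
            _ = p x := mul_one _
      _ = 1 := hpsum
  refine ⟨second, ?_⟩
  calc ∑ x, p x * ‖X x - ∑ y, ((p y : ℝ) : ℂ) * X y‖ ^ 2
      ≤ ∑ x, p x * ‖X x‖ ^ 2 :=
        var_le_second_moment p (fun x => (hppos x).le) hpsum X
    _ ≤ 1 := second
end

section
/- Let P be a real polynomial of degree d with coefficients a_0,...,a_d satisfying |P(x)| ≤ 1 for x ∈ [−1,1]. Let A ∈ ℂ^{N×N} be Hermitian with ‖A‖ ≤ 1, |ψ⟩, |φ⟩ unit vectors, and suppose Ê_0,...,Ê_d ∈ ℂ satisfy |Ê_r − ⟨ψ|A^r|φ⟩| ≤ η/4^d for all r with a_r ≠ 0. Then |Σ_{r=0}^d a_r Ê_r − ⟨ψ|P(A)|φ⟩| ≤ η. -/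
open scoped Matrix

/-- Bound on sum of absolute values of Chebyshev coefficients: S 0 = S 1 = 1,
S (k+2) = 2 S(k+1) + S k. -/
def shS : ℕ → ℕ
  | 0 => 1
  | 1 => 1
  | (k+2) => 2 * shS (k+1) + shS k

lemma shS_le : ∀ k : ℕ, 2 * shS (k+1) ≤ 3 * 4 ^ k := by
  intro k
  induction k using Nat.strong_induction_on with
  | _ k ih =>
    match k with
    | 0 => simp [shS]
    | 1 => simp [shS]
    | (k+2) =>
      have ha : 2 * shS (k+2) ≤ 3 * 4 ^ (k+1) := ih (k+1) (by omega)
      have hb : 2 * shS (k+1) ≤ 3 * 4 ^ k := ih k (by omega)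
      have hc : shS (k+3) = 2 * shS (k+2) + shS (k+1) := rfl
      have hd : (4:ℕ) ^ (k+2) = 16 * 4 ^ k := by ring
      have he : (4:ℕ) ^ (k+1) = 4 * 4 ^ k := by ring
      show 2 * shS (k+3) ≤ 3 * 4 ^ (k+2)
      omega

lemma sum_shS_le (d : ℕ) :
    ∑ j ∈ Finset.range (2*d+1), shS ((j : ℤ) - d).natAbs ≤ 4 ^ d := by
  induction d with
  | zero => simp [shS]
  | succ d ih =>
    have hrw : 2*(d+1)+1 = (2*d+1) + 1 + 1 := by ring
    rw [hrw, Finset.sum_range_succ, Finset.sum_range_succ']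
    have h1 : (((2*d+1+1 : ℕ) : ℤ) - ((d+1 : ℕ) : ℤ)).natAbs = d + 1 := by
      push_cast; omega
    have h2 : (((0 : ℕ) : ℤ) - ((d+1 : ℕ) : ℤ)).natAbs = d + 1 := by push_cast; omega
    have h3 : ∀ j ∈ Finset.range (2*d+1),
        shS (((j+1 : ℕ) : ℤ) - ((d+1 : ℕ) : ℤ)).natAbs = shS ((j : ℤ) - d).natAbs := by
      intro j _
      congr 1
      push_cast
      omega
    rw [Finset.sum_congr rfl h3, h1, h2]
    have h4 := shS_le d
    have h5 : (4:ℕ) ^ (d+1) = 4 * 4 ^ d := by ring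
    omega

open Polynomial Polynomial.Chebyshev in
lemma cheb_coeff_sum (d : ℕ) : ∀ k : ℕ,
    ∑ r ∈ Finset.range (d+1), |(T ℝ (k : ℤ)).coeff r| ≤ (shS k : ℝ) := by
  intro k
  induction k using Nat.strong_induction_on with
  | _ k ih =>
    match k with
    | 0 =>
      simp [Polynomial.coeff_one, apply_ite abs, Finset.sum_ite_eq', shS]
    | 1 =>
      simp only [Nat.cast_one, T_one, Polynomial.coeff_X, shS, Nat.cast_one]
      rw [Finset.sum_congr rfl (fun r _ => by rw [apply_ite abs, abs_one, abs_zero]),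
        Finset.sum_ite_eq]
      split_ifs <;> norm_num
    | (k+2) =>
      have ha := ih (k+1) (by omega)
      have hb := ih k (by omega)
      have hT : T ℝ ((k+2 : ℕ) : ℤ) = 2 * X * T ℝ ((k+1 : ℕ) : ℤ) - T ℝ (k : ℤ) := by
        push_cast
        exact T_add_two ℝ k
      have hcoeff : ∀ r : ℕ, (T ℝ ((k+2:ℕ) : ℤ)).coeff r
          = 2 * (X * T ℝ ((k+1:ℕ) : ℤ)).coeff r - (T ℝ (k : ℤ)).coeff r := by
        intro r
        rw [hT, mul_assoc, Polynomial.coeff_sub, Polynomial.coeff_ofNat_mul]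
      have hzero : (X * T ℝ ((k+1:ℕ) : ℤ)).coeff 0 = 0 := by
        rw [Polynomial.mul_coeff_zero, Polynomial.coeff_X_zero, zero_mul]
      have hsucc : ∀ r : ℕ, (X * T ℝ ((k+1:ℕ) : ℤ)).coeff (r+1) = (T ℝ ((k+1:ℕ) : ℤ)).coeff r :=
        fun r => Polynomial.coeff_X_mul _ r
      have step : ∑ r ∈ Finset.range (d+1), |(T ℝ ((k+2:ℕ) : ℤ)).coeff r|
          ≤ 2 * ∑ r ∈ Finset.range (d+1), |(T ℝ ((k+1:ℕ) : ℤ)).coeff r|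
            + ∑ r ∈ Finset.range (d+1), |(T ℝ (k : ℤ)).coeff r| := by
        rw [Finset.sum_range_succ' (fun r => |(T ℝ ((k+2:ℕ) : ℤ)).coeff r|) d]
        have e0 : |(T ℝ ((k+2:ℕ) : ℤ)).coeff 0| = |(T ℝ (k : ℤ)).coeff 0| := by
          rw [hcoeff 0, hzero]; simp
        have e1 : ∀ r ∈ Finset.range d, |(T ℝ ((k+2:ℕ) : ℤ)).coeff (r+1)|
            ≤ 2 * |(T ℝ ((k+1:ℕ) : ℤ)).coeff r| + |(T ℝ (k : ℤ)).coeff (r+1)| := by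
          intro r _
          rw [hcoeff (r+1), hsucc r]
          calc |2 * (T ℝ ((k+1:ℕ):ℤ)).coeff r - (T ℝ (k:ℤ)).coeff (r+1)|
              ≤ |2 * (T ℝ ((k+1:ℕ):ℤ)).coeff r| + |(T ℝ (k:ℤ)).coeff (r+1)| := abs_sub _ _
            _ = 2 * |(T ℝ ((k+1:ℕ):ℤ)).coeff r| + |(T ℝ (k:ℤ)).coeff (r+1)| := by
                rw [abs_mul]; norm_num
        calc (∑ r ∈ Finset.range d, |(T ℝ ((k+2:ℕ) : ℤ)).coeff (r+1)|)
              + |(T ℝ ((k+2:ℕ) : ℤ)).coeff 0|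
            ≤ (∑ r ∈ Finset.range d, (2 * |(T ℝ ((k+1:ℕ) : ℤ)).coeff r|
                + |(T ℝ (k : ℤ)).coeff (r+1)|)) + |(T ℝ (k : ℤ)).coeff 0| := by
              exact add_le_add (Finset.sum_le_sum e1) (le_of_eq e0)
          _ = 2 * (∑ r ∈ Finset.range d, |(T ℝ ((k+1:ℕ) : ℤ)).coeff r|)
                + ((∑ r ∈ Finset.range d, |(T ℝ (k : ℤ)).coeff (r+1)|)
                  + |(T ℝ (k : ℤ)).coeff 0|) := by
              rw [Finset.sum_add_distrib, Finset.mul_sum]; ring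
          _ = 2 * (∑ r ∈ Finset.range d, |(T ℝ ((k+1:ℕ) : ℤ)).coeff r|)
                + ∑ r ∈ Finset.range (d+1), |(T ℝ (k : ℤ)).coeff r| := by
              rw [Finset.sum_range_succ' (fun r => |(T ℝ (k : ℤ)).coeff r|) d]
          _ ≤ 2 * (∑ r ∈ Finset.range (d+1), |(T ℝ ((k+1:ℕ) : ℤ)).coeff r|)
                + ∑ r ∈ Finset.range (d+1), |(T ℝ (k : ℤ)).coeff r| := by
              have := Finset.sum_le_sum_of_subset_of_nonneg
                  (Finset.range_subset_range.2 (show d ≤ d + 1 by omega))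
                  (fun i _ _ => abs_nonneg ((T ℝ ((k+1:ℕ) : ℤ)).coeff i))
              linarith
      have hS : (shS (k+2) : ℝ) = 2 * shS (k+1) + shS k := by
        show ((2 * shS (k+1) + shS k : ℕ) : ℝ) = _
        push_cast; ring
      rw [hS]
      calc ∑ r ∈ Finset.range (d+1), |(T ℝ ((k+2:ℕ) : ℤ)).coeff r|
          ≤ 2 * ∑ r ∈ Finset.range (d+1), |(T ℝ ((k+1:ℕ) : ℤ)).coeff r|
            + ∑ r ∈ Finset.range (d+1), |(T ℝ (k : ℤ)).coeff r| := step
        _ ≤ 2 * (shS (k+1) : ℝ) + (shS k : ℝ) := by gcongr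


open Finset Complex

noncomputable def bc (d : ℕ) (a : Fin (d+1) → ℝ) (j : ℕ) : ℝ :=
  ∑ i : Fin (d+1), ∑ m ∈ Finset.range ((i:ℕ)+1),
    if d + 2*m = j + (i:ℕ) then a i * ((i:ℕ).choose m) / 2^(i:ℕ) else 0

lemma bc_key (d : ℕ) (a : Fin (d+1) → ℝ) (θ : ℝ) :
    ∑ j ∈ Finset.range (2*d+1), (bc d a j : ℂ) * Complex.exp (j*θ*Complex.I)
      = Complex.exp (d*θ*Complex.I) * ∑ i : Fin (d+1), (a i : ℂ) * (Real.cos θ : ℂ)^(i:ℕ) := by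
  have hL : ∑ j ∈ Finset.range (2*d+1), (bc d a j : ℂ) * Complex.exp (j*θ*Complex.I)
      = ∑ i : Fin (d+1), ∑ m ∈ Finset.range ((i:ℕ)+1),
          (a i * ((i:ℕ).choose m) / 2^(i:ℕ) : ℝ) * Complex.exp ((d + 2*m - (i:ℕ) : ℕ)*θ*Complex.I) := by
    simp only [bc, Complex.ofReal_sum, Finset.sum_mul]
    rw [Finset.sum_comm]
    refine Finset.sum_congr rfl (fun i _ => ?_)
    rw [Finset.sum_comm]
    refine Finset.sum_congr rfl (fun m hm => ?_)
    have hm' : m ≤ (i:ℕ) := by simpa using Nat.lt_succ_iff.mp (Finset.mem_range.mp hm)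
    have hi : (i:ℕ) ≤ d := Nat.lt_succ_iff.mp i.2
    have hmem : d + 2*m - (i:ℕ) ∈ Finset.range (2*d+1) := by
      rw [Finset.mem_range]; omega
    have hcond : ∀ j : ℕ, (d + 2*m = j + (i:ℕ)) ↔ j = d + 2*m - (i:ℕ) := by
      intro j; omega
    rw [Finset.sum_congr rfl (fun j _ => by
      rw [if_congr (hcond j) rfl rfl, apply_ite (Complex.ofReal), Complex.ofReal_zero,
        ite_zero_mul])]
    rw [Finset.sum_ite_eq' (Finset.range (2*d+1)), if_pos hmem]
  rw [hL, Finset.mul_sum]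
  refine Finset.sum_congr rfl (fun i _ => ?_)
  have hi : (i:ℕ) ≤ d := Nat.lt_succ_iff.mp i.2
  have hcos : (Real.cos θ : ℂ) = (Complex.exp (θ*Complex.I) + Complex.exp (-(θ*Complex.I)))/2 := by
    rw [Complex.ofReal_cos, Complex.cos]
    ring_nf
  rw [hcos, div_pow, add_pow, Finset.sum_div, Finset.mul_sum, Finset.mul_sum]
  refine Finset.sum_congr rfl (fun m hm => ?_)
  have hm' : m ≤ (i:ℕ) := Nat.lt_succ_iff.mp (Finset.mem_range.mp hm)
  rw [← Complex.exp_nat_mul, ← Complex.exp_nat_mul, ← Complex.exp_add]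
  rw [show ((d + 2*m - (i:ℕ) : ℕ) : ℂ) * θ * Complex.I
      = (d:ℂ)*θ*Complex.I + ((m:ℕ):ℂ)*(θ*Complex.I) + ((i:ℕ) - m : ℕ)*(-(θ*Complex.I)) by
    rw [Nat.cast_sub (by omega : (i:ℕ) ≤ d + 2*m), Nat.cast_sub hm']
    push_cast
    ring]
  rw [Complex.exp_add]
  push_cast
  field_simp
  simp only [mul_assoc, ← Complex.exp_add]
  ring_nf

lemma bc_bound (d : ℕ) (a : Fin (d+1) → ℝ)
    (hP : ∀ x ∈ Set.Icc (-1:ℝ) 1, |∑ i : Fin (d+1), a i * x^(i:ℕ)| ≤ 1) :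
    ∀ j ∈ Finset.range (2*d+1), |bc d a j| ≤ 1 := by
  intro j hj
  set n := 2*d+1 with hn
  have hj' : j < n := Finset.mem_range.mp hj
  have hnpos : 0 < n := by omega
  have hnC : (n:ℂ) ≠ 0 := Nat.cast_ne_zero.mpr hnpos.ne'
  have hnR : (n:ℝ) ≠ 0 := by positivity
  set θ : ℕ → ℝ := fun l => 2*Real.pi*l/n with hθ
  have orth : ∀ j' ∈ Finset.range n, ∑ l ∈ Finset.range n,
      Complex.exp (j'*(θ l : ℝ)*Complex.I) * Complex.exp (-(j*(θ l : ℝ)*Complex.I))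
      = if j' = j then (n:ℂ) else 0 := by
    intro j' hj2
    have hj2' : j' < n := Finset.mem_range.mp hj2
    set r : ℝ := ((j':ℝ) - j) * (2*Real.pi/n) with hr
    have hterm : ∀ l : ℕ, Complex.exp (j'*(θ l : ℝ)*Complex.I) * Complex.exp (-(j*(θ l : ℝ)*Complex.I))
        = (Complex.exp ((r:ℝ)*Complex.I))^l := by
      intro l
      rw [← Complex.exp_nat_mul, ← Complex.exp_add]
      congr 1
      simp only [hθ, hr]
      push_cast
      field_simp
      ring
    by_cases hcase : j' = j
    · subst hcase
      rw [if_pos rfl]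
      have : r = 0 := by simp [hr]
      simp only [hterm, this]
      simp
    · rw [if_neg hcase]
      have hz1 : Complex.exp ((r:ℝ)*Complex.I) ≠ 1 := by
        intro h
        rw [Complex.exp_eq_one_iff] at h
        obtain ⟨k, hk⟩ := h
        have him := congrArg Complex.im hk
        simp [Complex.mul_im] at him
        -- him : r = k * (2π)  (roughly)
        have hreal : ((j':ℝ) - j) * (2*Real.pi/n) = k * (2*Real.pi) := by
          rw [← hr]; convert him using 1 <;> push_cast <;> ring
        have hpi := Real.pi_pos
        have hjj : (j':ℝ) - j = k * n := by
          field_simp at hreal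
          nlinarith [hreal]
        have hk0 : k ≠ 0 := by
          intro h0
          rw [h0] at hjj
          simp at hjj
          have : (j':ℝ) = j := by linarith
          exact hcase (by exact_mod_cast this)
        have h1k : (1:ℝ) ≤ |(k:ℝ)| := by
          have := Int.one_le_abs hk0
          exact_mod_cast this
        have habs : |(j':ℝ) - j| = |(k:ℝ)| * n := by
          rw [hjj, abs_mul, abs_of_pos (by positivity : (0:ℝ) < n)]
        have hlt : |(j':ℝ) - j| < n := by
          rw [abs_sub_lt_iff]
          constructor <;> [skip; skip] <;>
            · have b1 : (j':ℝ) < n := by exact_mod_cast hj2'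
              have b2 : (j:ℝ) < n := by exact_mod_cast hj'
              have c1 : (0:ℝ) ≤ (j':ℝ) := by positivity
              have c2 : (0:ℝ) ≤ (j:ℝ) := by positivity
              linarith
        nlinarith [hlt, habs, h1k, (by positivity : (0:ℝ) < (n:ℝ))]
      have hzn : (Complex.exp ((r:ℝ)*Complex.I))^n = 1 := by
        rw [← Complex.exp_nat_mul]
        have : (n:ℂ) * ((r:ℝ)*Complex.I) = ((j':ℤ) - j : ℤ) * (2*(Real.pi:ℂ)*Complex.I) := by
          have hrn : (n:ℝ) * r = ((j':ℝ) - j) * (2*Real.pi) := by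
            rw [hr]; field_simp
          calc (n:ℂ) * ((r:ℝ)*Complex.I) = (((n:ℝ) * r : ℝ):ℂ) * Complex.I := by
                push_cast; ring
            _ = _ := by rw [hrn]; push_cast; ring
        rw [this]
        exact Complex.exp_int_mul_two_pi_mul_I _
      simp only [hterm]
      rw [geom_sum_eq hz1, hzn]
      simp
  have main : (bc d a j : ℂ) * n = ∑ l ∈ Finset.range n,
      (Complex.exp (d*(θ l : ℝ)*Complex.I) * ∑ i : Fin (d+1), (a i : ℂ) * (Real.cos (θ l) : ℂ)^(i:ℕ))
        * Complex.exp (-(j*(θ l : ℝ)*Complex.I)) := by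
    calc (bc d a j : ℂ) * n
        = ∑ j' ∈ Finset.range n, (bc d a j' : ℂ) *
            ∑ l ∈ Finset.range n, Complex.exp (j'*(θ l : ℝ)*Complex.I)
              * Complex.exp (-(j*(θ l : ℝ)*Complex.I)) := by
          rw [Finset.sum_congr rfl (fun j' hj2 => by rw [orth j' hj2])]
          simp only [mul_ite, mul_zero]
          rw [Finset.sum_ite_eq' (Finset.range n) j (fun j' => (bc d a j' : ℂ) * n), if_pos hj]
      _ = ∑ l ∈ Finset.range n, (∑ j' ∈ Finset.range n, (bc d a j' : ℂ)
            * Complex.exp (j'*(θ l : ℝ)*Complex.I)) * Complex.exp (-(j*(θ l : ℝ)*Complex.I)) := by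
          simp only [Finset.mul_sum, Finset.sum_mul]
          rw [Finset.sum_comm]
          refine Finset.sum_congr rfl fun l _ => Finset.sum_congr rfl fun j' _ => by ring
      _ = _ := by
          refine Finset.sum_congr rfl fun l _ => ?_
          rw [bc_key d a (θ l)]
  have habs1 : ∀ l : ℕ, ‖((Complex.exp (d*(θ l : ℝ)*Complex.I)
      * ∑ i : Fin (d+1), (a i : ℂ) * (Real.cos (θ l) : ℂ)^(i:ℕ))
        * Complex.exp (-(j*(θ l : ℝ)*Complex.I)))‖ ≤ 1 := by
    intro l
    rw [norm_mul, norm_mul]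
    have e1 : ‖(Complex.exp (d*(θ l : ℝ)*Complex.I))‖ = 1 := by
      rw [show ((d:ℂ)*(θ l : ℝ)*Complex.I) = ((d * θ l : ℝ) : ℂ)*Complex.I by push_cast; ring]
      exact Complex.norm_exp_ofReal_mul_I _
    have e2 : ‖(Complex.exp (-(j*(θ l : ℝ)*Complex.I)))‖ = 1 := by
      rw [show (-((j:ℂ)*(θ l : ℝ)*Complex.I)) = ((-(j * θ l) : ℝ) : ℂ)*Complex.I by push_cast; ring]
      exact Complex.norm_exp_ofReal_mul_I _
    have e3 : (∑ i : Fin (d+1), (a i : ℂ) * (Real.cos (θ l) : ℂ)^(i:ℕ))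
        = ((∑ i : Fin (d+1), a i * (Real.cos (θ l))^(i:ℕ) : ℝ) : ℂ) := by
      push_cast; rfl
    rw [e1, e2, e3, Complex.norm_real]
    have := hP (Real.cos (θ l)) ⟨Real.neg_one_le_cos _, Real.cos_le_one _⟩
    simpa using this
  have hfinal : ‖((bc d a j : ℂ) * n)‖ ≤ n := by
    rw [main]
    calc ‖_‖ ≤ ∑ l ∈ Finset.range n, ‖_‖ := norm_sum_le _ _
      _ ≤ ∑ l ∈ Finset.range n, (1:ℝ) := Finset.sum_le_sum (fun l _ => habs1 l)
      _ = n := by simp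
  rw [norm_mul, Complex.norm_real, Real.norm_eq_abs, Complex.norm_natCast] at hfinal
  calc |bc d a j| = |bc d a j| * n / n := by field_simp
    _ ≤ n / n := by gcongr
    _ = 1 := by field_simp

open Polynomial Polynomial.Chebyshev in
lemma sherstov (d : ℕ) (a : Fin (d+1) → ℝ)
    (hP : ∀ x ∈ Set.Icc (-1:ℝ) 1, |∑ i : Fin (d+1), a i * x^(i:ℕ)| ≤ 1) :
    ∑ i : Fin (d+1), |a i| ≤ 4^d := by
  classical
  set p : ℝ[X] := ∑ i : Fin (d+1), Polynomial.C (a i) * Polynomial.X^(i:ℕ) with hp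
  set q : ℝ[X] := ∑ j ∈ Finset.range (2*d+1), Polynomial.C (bc d a j) * T ℝ ((j:ℤ) - d) with hq
  have hpq : p = q := by
    apply Polynomial.eq_of_infinite_eval_eq
    apply Set.Infinite.mono (s := Set.Icc (-1:ℝ) 1) ?_ (Set.Icc_infinite (by norm_num))
    intro x hx
    simp only [Set.mem_setOf_eq]
    set θ : ℝ := Real.arccos x with hθdef
    have hcx : Real.cos θ = x := Real.cos_arccos hx.1 hx.2
    have key := bc_key d a θ
    -- divide by exp(dθI)
    have hexp : Complex.exp ((d:ℂ)*θ*Complex.I) ≠ 0 := Complex.exp_ne_zero _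
    have h2 : ∑ j ∈ Finset.range (2*d+1),
        (bc d a j : ℂ) * Complex.exp (((((j:ℤ) - d : ℤ) : ℝ) * θ : ℝ)*Complex.I)
        = ((∑ i : Fin (d+1), a i * x^(i:ℕ) : ℝ) : ℂ) := by
      have expand : ∀ j ∈ Finset.range (2*d+1),
          (bc d a j : ℂ) * Complex.exp (((((j:ℤ) - d : ℤ) : ℝ) * θ : ℝ)*Complex.I)
            * Complex.exp ((d:ℂ)*θ*Complex.I)
          = (bc d a j : ℂ) * Complex.exp ((j:ℂ)*θ*Complex.I) := by
        intro j _
        rw [mul_assoc, ← Complex.exp_add]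
        congr 2
        push_cast
        ring
      apply mul_right_cancel₀ hexp
      rw [Finset.sum_mul, Finset.sum_congr rfl expand, key, mul_comm]
      congr 1
      rw [← hcx]
      push_cast
      rfl
    have h4 := congrArg Complex.re h2
    simp only [Complex.ofReal_re] at h4
    have h5 : ∀ j ∈ Finset.range (2*d+1),
        ((bc d a j : ℂ) * Complex.exp (((((j:ℤ) - d : ℤ) : ℝ) * θ : ℝ)*Complex.I)).re
        = bc d a j * Real.cos ((((j:ℤ) - d : ℤ) : ℝ) * θ) := by
      intro j _
      rw [Complex.mul_re, Complex.ofReal_re, Complex.ofReal_im]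
      rw [Complex.exp_ofReal_mul_I_re, Complex.exp_ofReal_mul_I_im]
      ring
    rw [Complex.re_sum, Finset.sum_congr rfl h5] at h4
    -- now evaluate polynomials
    have hevalp : p.eval x = ∑ i : Fin (d+1), a i * x^(i:ℕ) := by
      simp [hp, Polynomial.eval_finset_sum]
    have hevalq : q.eval x = ∑ j ∈ Finset.range (2*d+1),
        bc d a j * Real.cos ((((j:ℤ) - d : ℤ) : ℝ) * θ) := by
      rw [hq, Polynomial.eval_finset_sum]
      refine Finset.sum_congr rfl fun j _ => ?_
      rw [Polynomial.eval_mul, Polynomial.eval_C, ← hcx, T_real_cos]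
    rw [hevalp, hevalq, ← h4]
  -- coefficients
  have hcoeff : ∀ i : Fin (d+1),
      a i = ∑ j ∈ Finset.range (2*d+1), bc d a j * (T ℝ ((j:ℤ) - d)).coeff (i:ℕ) := by
    intro i
    have h6 := congrArg (fun r => Polynomial.coeff r (i:ℕ)) hpq
    simp only [hp, hq, Polynomial.finset_sum_coeff, Polynomial.coeff_C_mul,
      Polynomial.coeff_X_pow] at h6
    have hre : ∀ i' : Fin (d+1), (a i' * if (i:ℕ) = (i':ℕ) then (1:ℝ) else 0)
        = if i' = i then a i' else 0 := by
      intro i'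
      by_cases h : i' = i
      · subst h; simp
      · rw [if_neg (by simpa [Fin.val_eq_val, eq_comm] using h), if_neg h, mul_zero]
    rw [Finset.sum_congr rfl (fun i' _ => hre i'),
      Finset.sum_ite_eq' Finset.univ i a, if_pos (Finset.mem_univ i)] at h6
    exact h6
  have hTabs : ∀ z : ℤ, T ℝ z = T ℝ (z.natAbs : ℤ) := by
    intro z
    rcases Int.natAbs_eq z with h | h
    · rw [← h]
    · conv_lhs => rw [h]
      rw [T_neg]
  calc ∑ i : Fin (d+1), |a i|
      = ∑ i : Fin (d+1), |∑ j ∈ Finset.range (2*d+1), bc d a j * (T ℝ ((j:ℤ) - d)).coeff (i:ℕ)| :=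
        Finset.sum_congr rfl fun i _ => by rw [← hcoeff i]
    _ ≤ ∑ i : Fin (d+1), ∑ j ∈ Finset.range (2*d+1), |bc d a j| * |(T ℝ ((j:ℤ) - d)).coeff (i:ℕ)| := by
        refine Finset.sum_le_sum fun i _ => ?_
        refine le_trans (Finset.abs_sum_le_sum_abs _ _) ?_
        exact le_of_eq (Finset.sum_congr rfl fun j _ => abs_mul _ _)
    _ ≤ ∑ i : Fin (d+1), ∑ j ∈ Finset.range (2*d+1), |(T ℝ ((j:ℤ) - d)).coeff (i:ℕ)| := by
        refine Finset.sum_le_sum fun i _ => Finset.sum_le_sum fun j hj => ?_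
        exact mul_le_of_le_one_left (abs_nonneg _) (bc_bound d a hP j hj)
    _ = ∑ j ∈ Finset.range (2*d+1), ∑ i : Fin (d+1), |(T ℝ ((j:ℤ) - d)).coeff (i:ℕ)| :=
        Finset.sum_comm
    _ ≤ ∑ j ∈ Finset.range (2*d+1), (shS (((j:ℤ) - d).natAbs) : ℝ) := by
        refine Finset.sum_le_sum fun j _ => ?_
        rw [hTabs ((j:ℤ) - d)]
        rw [show ∑ i : Fin (d+1), |(T ℝ ((((j:ℤ) - d).natAbs : ℕ) : ℤ)).coeff (i:ℕ)|
            = ∑ r ∈ Finset.range (d+1), |(T ℝ ((((j:ℤ) - d).natAbs : ℕ) : ℤ)).coeff r| from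
          Fin.sum_univ_eq_sum_range (fun r => |(T ℝ ((((j:ℤ) - d).natAbs : ℕ) : ℤ)).coeff r|) (d+1)]
        exact cheb_coeff_sum d _
    _ = ((∑ j ∈ Finset.range (2*d+1), shS (((j:ℤ) - d).natAbs) : ℕ) : ℝ) := by push_cast; rfl
    _ ≤ ((4^d : ℕ) : ℝ) := by exact_mod_cast sum_shS_le d
    _ = 4^d := by push_cast; rfl

/-- If `P(x) = ∑_r a_r x^r` satisfies `|P(x)| ≤ 1` on `[−1,1]`, `A` is Hermitian with
`‖A‖ ≤ 1`, and each `Ê r` approximates `⟨ψ|A^r|φ⟩` within `η/4^d` (whenever `a_r ≠ 0`),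
then `|∑_r a_r Ê_r − ⟨ψ|P(A)|φ⟩| ≤ η`, where `⟨ψ|P(A)|φ⟩ = ∑_r a_r ⟨ψ|A^r|φ⟩`. -/
theorem polynomial_transformation_error
    {N : ℕ} (d : ℕ) (a : Fin (d + 1) → ℝ)
    (hP : ∀ x ∈ Set.Icc (-1 : ℝ) 1, |∑ i : Fin (d + 1), a i * x ^ (i : ℕ)| ≤ 1)
    (A : Matrix (Fin N) (Fin N) ℂ) (hA : A.IsHermitian) (hAnorm : specNorm A ≤ 1)
    (ψ φ : Fin N → ℂ) (hψ : star ψ ⬝ᵥ ψ = 1) (hφ : star φ ⬝ᵥ φ = 1)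
    (E : Fin (d + 1) → ℂ) (η : ℝ) (hη : 0 ≤ η)
    (hE : ∀ r : Fin (d + 1), a r ≠ 0 →
      ‖E r - star ψ ⬝ᵥ ((A ^ (r : ℕ)).mulVec φ)‖ ≤ η / 4 ^ d) :
    ‖∑ r : Fin (d + 1), (a r : ℂ) * E r -
          ∑ r : Fin (d + 1), (a r : ℂ) * (star ψ ⬝ᵥ ((A ^ (r : ℕ)).mulVec φ))‖ ≤ η := by
  have hS := sherstov d a hP
  set v : Fin (d+1) → ℂ := fun r => star ψ ⬝ᵥ ((A ^ (r : ℕ)).mulVec φ) with hv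
  have hsplit : ∑ r : Fin (d + 1), (a r : ℂ) * E r - ∑ r : Fin (d + 1), (a r : ℂ) * v r
      = ∑ r : Fin (d + 1), (a r : ℂ) * (E r - v r) := by
    rw [← Finset.sum_sub_distrib]
    exact Finset.sum_congr rfl fun r _ => by ring
  have hq : (0:ℝ) ≤ η / 4 ^ d := by positivity
  calc ‖(∑ r : Fin (d + 1), (a r : ℂ) * E r - ∑ r : Fin (d + 1), (a r : ℂ) * v r)‖
      = ‖(∑ r : Fin (d + 1), (a r : ℂ) * (E r - v r))‖ := by rw [hsplit]
    _ ≤ ∑ r : Fin (d + 1), ‖((a r : ℂ) * (E r - v r))‖ := norm_sum_le _ _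
    _ = ∑ r : Fin (d + 1), |a r| * ‖(E r - v r)‖ := by
        refine Finset.sum_congr rfl fun r _ => ?_
        rw [norm_mul, Complex.norm_real, Real.norm_eq_abs]
    _ ≤ ∑ r : Fin (d + 1), |a r| * (η / 4 ^ d) := by
        refine Finset.sum_le_sum fun r _ => ?_
        by_cases h : a r = 0
        · simp [h, hq]
        · exact mul_le_mul_of_nonneg_left (hE r h) (abs_nonneg _)
    _ = (∑ r : Fin (d + 1), |a r|) * (η / 4 ^ d) := (Finset.sum_mul _ _ _).symm
    _ ≤ (4:ℝ)^d * (η / 4 ^ d) := mul_le_mul_of_nonneg_right hS hq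
    _ = η := by field_simp
end
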